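/- Let k ∈ 𝕊², let g ∈ A_k(𝔹⁴), and let i ∈ 𝕊². Then ( ∫_D ‖ g(x + i y) − g(x + k y) ‖² dμ(x,y) )^{1/2} ≤ √2 · ‖i − k‖ · ‖g‖_{A_k(𝔹⁴)}. -/

import Mathlib

noncomputable section

open MeasureTheory Filter

notation "ℍ" => Quaternion ℝ

/-- The set of pure imaginary unit quaternions `𝕊²`. -/
def Sph2 (i : ℍ) : Prop := i.re = 0 ∧ ‖i‖ = 1

/-- Ordered pairs of orthogonal pure imaginary unit quaternions (the set `T`). -/
def OrthPair (i j : ℍ) : Prop := Sph2 i ∧ Sph2 j ∧ (i * star j).re = 0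

/-- The slice complex plane `ℂ(i) = {x + y i}`. -/
def CC (i : ℍ) : Set ℍ := {q | ∃ x y : ℝ, q = (x : ℍ) + y • i}

/-- Slice regularity of `f` on `Ω`: real differentiability together with the
Cauchy–Riemann condition `½(∂/∂x + i ∂/∂y) f = 0` on every slice. -/
def SliceRegularOn (f : ℍ → ℍ) (Ω : Set ℍ) : Prop :=
  ∀ ⦃i : ℍ⦄, Sph2 i → ∀ x y : ℝ, ((x : ℍ) + y • i) ∈ Ω →
    DifferentiableAt ℝ f ((x : ℍ) + y • i) ∧
    fderiv ℝ f ((x : ℍ) + y • i) 1 + i * fderiv ℝ f ((x : ℍ) + y • i) i = 0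

/-- Axially symmetric slice domain. -/
structure AxSymSDomain (Ω : Set ℍ) : Prop where
  isOpen : IsOpen Ω
  isConnected : IsConnected Ω
  real_nonempty : (Ω ∩ Set.range ((↑) : ℝ → ℍ)).Nonempty
  slice_connected : ∀ ⦃i : ℍ⦄, Sph2 i →
    IsConnected {p : ℝ × ℝ | ((p.1 : ℍ) + p.2 • i) ∈ Ω}
  axial : ∀ (x y : ℝ) ⦃i : ℍ⦄, Sph2 i → ((x : ℍ) + y • i) ∈ Ω →
    ∀ ⦃j : ℍ⦄, Sph2 j → ((x : ℍ) + y • j) ∈ Ω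

/-- The slice `Ω ∩ ℂ(i)` as a subset of `ℝ²`. -/
def sliceSet (Ω : Set ℍ) (i : ℍ) : Set (ℝ × ℝ) := {p | ((p.1 : ℍ) + p.2 • i) ∈ Ω}

/-- `‖f‖²_{A_i(Ω)} = ∫_{Ω ∩ ℂ(i)} ‖f‖² dσ_i`. -/
def bergmanNormSq (Ω : Set ℍ) (i : ℍ) (f : ℍ → ℍ) : ℝ :=
  ∫ p in sliceSet Ω i, ‖f ((p.1 : ℍ) + p.2 • i)‖ ^ 2

/-- The slice regular Bergman norm `‖f‖_{A_i(Ω)}`. -/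
def bergmanNorm (Ω : Set ℍ) (i : ℍ) (f : ℍ → ℍ) : ℝ :=
  Real.sqrt (bergmanNormSq Ω i f)

/-- Membership in the slice regular Bergman space `A_i(Ω)`. -/
def MemBergman (Ω : Set ℍ) (i : ℍ) (f : ℍ → ℍ) : Prop :=
  SliceRegularOn f Ω ∧
  IntegrableOn (fun p : ℝ × ℝ => ‖f ((p.1 : ℍ) + p.2 • i)‖ ^ 2) (sliceSet Ω i)

/-- The quaternionic Bergman inner product `⟨f,g⟩ = ∫ conj(f) g dσ_i`. -/
def bergmanInner (Ω : Set ℍ) (i : ℍ) (f g : ℍ → ℍ) : ℍ :=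
  ∫ p in sliceSet Ω i, star (f ((p.1 : ℍ) + p.2 • i)) * g ((p.1 : ℍ) + p.2 • i)

/-- The open unit ball `𝔹⁴ ⊆ ℍ`. -/
def B4 : Set ℍ := {q | ‖q‖ < 1}

/-- The open unit disk `D ⊆ ℝ²`. -/
def unitDisk : Set (ℝ × ℝ) := {p | p.1 ^ 2 + p.2 ^ 2 < 1}

/-- `‖f‖²_{A_i(𝔹⁴)} = ∫_D ‖f(x + yi)‖² dμ(x,y)`. -/
def bergNormSqB (i : ℍ) (f : ℍ → ℍ) : ℝ :=
  ∫ p in unitDisk, ‖f ((p.1 : ℍ) + p.2 • i)‖ ^ 2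

/-- The Bergman norm on `A_i(𝔹⁴)`. -/
def bergNormB (i : ℍ) (f : ℍ → ℍ) : ℝ := Real.sqrt (bergNormSqB i f)

/-- Membership in `A_i(𝔹⁴)`. -/
def MemBergB (i : ℍ) (f : ℍ → ℍ) : Prop :=
  SliceRegularOn f B4 ∧
  IntegrableOn (fun p : ℝ × ℝ => ‖f ((p.1 : ℍ) + p.2 • i)‖ ^ 2) unitDisk

open Classical in
/-- `I_q`: the imaginary unit direction of `q` (an arbitrary fixed unit when `q` is real). -/
def Imu (q : ℍ) : ℍ := if q.im = 0 then ⟨0, 1, 0, 0⟩ else ‖q.im‖⁻¹ • q.im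

/-- The extension operator `P_{k,·}`: for a slice function `g : ℝ² → ℍ` (representing
`x + y k ↦ g(x,y)`), `Pext k g (q) = ½[(1 + I_q k) g(x, −y) + (1 − I_q k) g(x, y)]`
where `q = x + I_q y`, `y = ‖im q‖ ≥ 0`. -/
def Pext (k : ℍ) (g : ℝ × ℝ → ℍ) (q : ℍ) : ℍ :=
  (2⁻¹ : ℝ) • ((1 + Imu q * k) * g (q.re, -‖q.im‖) + (1 - Imu q * k) * g (q.re, ‖q.im‖))

/-- The slice function `x + y k ↦ a + b k + c l + d kl`. -/
def sliceFun (a b c d : ℝ × ℝ → ℝ) (k l : ℍ) (p : ℝ × ℝ) : ℍ :=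
  (a p : ℍ) + b p • k + c p • l + d p • (k * l)

/-- `L²(D)` norm of a real function on the unit disk. -/
def L2D (a : ℝ × ℝ → ℝ) : ℝ := Real.sqrt (∫ p in unitDisk, a p ^ 2)

/-- Finiteness of the `L²(D)` norm. -/
def MemL2D (a : ℝ × ℝ → ℝ) : Prop := IntegrableOn (fun p => a p ^ 2) unitDisk

/-- Harmonicity on the unit disk: `a` is `C²` and `∂²a/∂x² + ∂²a/∂y² = 0`. -/
def HarmonicOnDisk (a : ℝ × ℝ → ℝ) : Prop :=
  ContDiffOn ℝ 2 a unitDisk ∧ ∀ p ∈ unitDisk,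
    fderiv ℝ (fun q => fderiv ℝ a q (1, 0)) p (1, 0)
      + fderiv ℝ (fun q => fderiv ℝ a q (0, 1)) p (0, 1) = 0

/-- `(a,b)` is a pair of conjugate harmonic functions on `D`:
both harmonic and satisfying the Cauchy–Riemann equations. -/
def ConjHarmPair (a b : ℝ × ℝ → ℝ) : Prop :=
  HarmonicOnDisk a ∧ HarmonicOnDisk b ∧
  ∀ p ∈ unitDisk,
    fderiv ℝ a p (1, 0) = fderiv ℝ b p (0, 1) ∧
    fderiv ℝ a p (0, 1) = -fderiv ℝ b p (1, 0)

/-- `(a,b) ∈ HL²(D)`. -/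
def HLpair (a b : ℝ × ℝ → ℝ) : Prop := ConjHarmPair a b ∧ MemL2D a ∧ MemL2D b

/-- Raw data of an element of `HL(D)`: a 2×2 matrix `(a b; c d)` of real functions
on the disk together with a pair `(k,l)` of quaternions. -/
structure HLElem where
  a : ℝ × ℝ → ℝ
  b : ℝ × ℝ → ℝ
  c : ℝ × ℝ → ℝ
  d : ℝ × ℝ → ℝ
  k : ℍ
  l : ℍ

/-- Membership in `HL(D)`: `(a,b),(c,d) ∈ HL²(D)` and `(k,l) ∈ T`. -/
def HLElem.mem (A : HLElem) : Prop := HLpair A.a A.b ∧ HLpair A.c A.d ∧ OrthPair A.k A.l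

/-- The bundle projection `P_{𝔹⁴}((a b; c d),(k,l)) = P_{k,l}[a + bk + cl + dkl]`. -/
def HLElem.proj (A : HLElem) : ℍ → ℍ := Pext A.k (sliceFun A.a A.b A.c A.d A.k A.l)

/-- The metric of `HL(D)`. -/
def HLdist (A B : HLElem) : ℝ :=
  L2D (A.a - B.a) + L2D (A.b - B.b) + L2D (A.c - B.c) + L2D (A.d - B.d)
    + Real.sqrt (‖A.k - B.k‖ ^ 2 + ‖A.l - B.l‖ ^ 2)

/-- `Q_{k,l}[f] : (x,y) ↦ f(x + y k)`, the restriction of `f` to the slice `ℂ(k)`. -/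
def Qsl (f : ℍ → ℍ) (k : ℍ) (p : ℝ × ℝ) : ℍ := f ((p.1 : ℍ) + p.2 • k)

/-- `D₁[f,k,l] = (Q[f] + conj(Q[f]))/2 = Re (Q[f])`. -/
def Dc1 (f : ℍ → ℍ) (k _l : ℍ) (p : ℝ × ℝ) : ℝ := (Qsl f k p).re

/-- `D₂[f,k,l] = −(Q[f]·k + conj(Q[f]·k))/2 = −Re (Q[f]·k)`. -/
def Dc2 (f : ℍ → ℍ) (k _l : ℍ) (p : ℝ × ℝ) : ℝ := -(Qsl f k p * k).re

/-- `D₃[f,k,l] = −(Q[f]·l + conj(Q[f]·l))/2 = −Re (Q[f]·l)`. -/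
def Dc3 (f : ℍ → ℍ) (k l : ℍ) (p : ℝ × ℝ) : ℝ := -(Qsl f k p * l).re

/-- `D₄[f,k,l] = (Q[f]·lk + conj(Q[f]·lk))/2 = Re (Q[f]·(lk))`. -/
def Dc4 (f : ℍ → ℍ) (k l : ℍ) (p : ℝ × ℝ) : ℝ := (Qsl f k p * (l * k)).re

/-- The section map `S_{k,l}[f] = ((D₁ D₂; D₃ D₄), (k,l))`. -/
def Smap (f : ℍ → ℍ) (k l : ℍ) : HLElem :=
  ⟨Dc1 f k l, Dc2 f k l, Dc3 f k l, Dc4 f k l, k, l⟩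

/-- The metric `ρ_i` on `A_i(𝔹⁴) × T`. -/
def rhoA (i : ℍ) (f : ℍ → ℍ) (k l : ℍ) (g : ℍ → ℍ) (m n : ℍ) : ℝ :=
  bergNormB i (f - g) + Real.sqrt (‖k - m‖ ^ 2 + ‖l - n‖ ^ 2)

lemma Sph2.normSq_eq {i : ℍ} (hi : Sph2 i) : Quaternion.normSq i = 1 := by
  have h := hi.2
  have h2 := Quaternion.normSq_eq_norm_mul_self (a := i)
  rw [h] at h2; simpa using h2

lemma Sph2.mul_self {i : ℍ} (hi : Sph2 i) : i * i = -1 := by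
  have hstar : star i = -i := Quaternion.star_eq_neg.2 hi.1
  have h := Quaternion.self_mul_star (a := i)
  rw [hstar, hi.normSq_eq] at h
  have h2 : i * -i = 1 := by simpa using h
  have := h2
  rw [mul_neg] at this
  linear_combination (norm := skip) -this
  abel

lemma norm_mk_sq {i : ℍ} (hi : Sph2 i) (x y : ℝ) : ‖(x:ℍ) + y • i‖^2 = x^2 + y^2 := by
  have h1 : Quaternion.normSq ((x:ℍ) + y • i) = x^2 + y^2 := by
    rw [Quaternion.normSq_def']
    have h1 := hi.normSq_eq
    rw [Quaternion.normSq_def'] at h1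
    have hre := hi.1
    simp only [Quaternion.re_add, Quaternion.imI_add, Quaternion.imJ_add, Quaternion.imK_add,
      Quaternion.re_coe, Quaternion.imI_coe, Quaternion.imJ_coe, Quaternion.imK_coe,
      Quaternion.re_smul, Quaternion.imI_smul, Quaternion.imJ_smul, Quaternion.imK_smul,
      smul_eq_mul] at *
    rw [hre] at h1 ⊢
    ring_nf
    nlinarith [h1]
  have h2 := Quaternion.normSq_eq_norm_mul_self (a := (x:ℍ) + y • i)
  nlinarith [h2, h1]

lemma quat_algebraMap (r : ℝ) : (algebraMap ℝ ℍ) r = (r : ℍ) := rfl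

lemma norm_mk (i : ℍ) (hi : Sph2 i) (x y : ℝ) :
    ‖(x:ℍ) + y • i‖ = Real.sqrt (x^2 + y^2) := by
  rw [← norm_mk_sq hi x y]; exact (Real.sqrt_sq (norm_nonneg _)).symm

lemma liftAux_norm {i : ℍ} (hi : Sph2 i) (z : ℂ) :
    ‖Complex.liftAux i hi.mul_self z‖ = ‖z‖ := by
  rw [Complex.liftAux_apply, quat_algebraMap, norm_mk i hi,
    Complex.norm_def, Complex.normSq_apply]
  ring_nf


def eC (j : ℍ) : ℂ →L[ℝ] ℍ :=
  LinearMap.toContinuousLinearMap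
    ((Complex.reLm.smulRight (1 : ℍ)) + (Complex.imLm.smulRight j))

lemma eC_apply (j : ℍ) (z : ℂ) : eC j z = ((z.re : ℝ) : ℍ) + z.im • j := by
  show z.re • (1:ℍ) + z.im • j = _
  rw [← Algebra.algebraMap_eq_smul_one, quat_algebraMap]

lemma eC_norm {j : ℍ} (hj : Sph2 j) (z : ℂ) : ‖eC j z‖ = ‖z‖ := by
  rw [eC_apply, norm_mk j hj, Complex.norm_def, Complex.normSq_apply]
  ring_nf

lemma eC_one (j : ℍ) : eC j 1 = 1 := by simp [eC_apply]
lemma eC_I (j : ℍ) : eC j Complex.I = j := by simp [eC_apply]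

lemma clm_ext_complex {L M : ℂ →L[ℝ] ℍ} (h1 : L 1 = M 1) (hI : L Complex.I = M Complex.I) :
    L = M := by
  refine ContinuousLinearMap.ext fun z => ?_
  have hz : z = z.re • (1:ℂ) + z.im • Complex.I := by
    simp [Complex.real_smul, Complex.re_add_im]
  calc L z = L (z.re • (1:ℂ) + z.im • Complex.I) := by rw [← hz]
    _ = z.re • L 1 + z.im • L Complex.I := by rw [map_add, L.map_smul, L.map_smul]
    _ = z.re • M 1 + z.im • M Complex.I := by rw [h1, hI]
    _ = M (z.re • (1:ℂ) + z.im • Complex.I) := by rw [map_add, M.map_smul, M.map_smul]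
    _ = M z := by rw [← hz]

lemma cr_dir {k : ℍ} (hk : Sph2 k) {a b : ℍ} (h : a + k * b = 0) : b = k * a := by
  have h2 : k * b = -a := by
    have h' : k * b + a = 0 := by rw [add_comm]; exact h
    rwa [add_eq_zero_iff_eq_neg] at h'
  have h3 : k * (k * b) = k * -a := by rw [h2]
  rw [← mul_assoc, hk.mul_self, neg_one_mul, mul_neg] at h3
  exact neg_injective h3

set_option maxHeartbeats 2000000 in
theorem rep_formula {k i : ℍ} (hk : Sph2 k) (hi : Sph2 i) {g : ℍ → ℍ}
    (hg : SliceRegularOn g B4) {x y : ℝ} (hxy : x^2 + y^2 < 1) :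
    g ((x:ℍ) + y • i)
      = (2⁻¹:ℝ) • ((1 - i*k) * g ((x:ℍ) + y • k) + (1 + i*k) * g ((x:ℍ) + (-y) • k)) := by
  letI mod : Module ℂ ℍ := (Complex.liftAux i hi.mul_self).toRingHom.toModule
  have hsmul : ∀ (z : ℂ) (q : ℍ), z • q = (Complex.liftAux i hi.mul_self z) * q := fun _ _ => rfl
  letI ns : NormedSpace ℂ ℍ := ⟨fun z q => by rw [hsmul, norm_mul, liftAux_norm hi]⟩
  letI : IsScalarTower ℝ ℂ ℍ :=
    ⟨fun r z q => by
      rw [hsmul, hsmul, _root_.map_smul (Complex.liftAux i hi.mul_self) r z, smul_mul_assoc]⟩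
  set F : ℂ → ℍ := fun z =>
    g (eC i z) - (2⁻¹:ℝ) • ((1 - i*k) * g (eC k z) + (1 + i*k) * g (eC k (starRingEnd ℂ z)))
    with hF
  have hmem : ∀ {j : ℍ}, Sph2 j → ∀ {z : ℂ}, z ∈ Metric.ball (0:ℂ) 1 → eC j z ∈ B4 := by
    intro j hj z hz
    have h : ‖eC j z‖ = ‖z‖ := eC_norm hj z
    simpa [B4, h] using mem_ball_zero_iff.1 hz
  have hconj_mem : ∀ {z : ℂ}, z ∈ Metric.ball (0:ℂ) 1 →
      (starRingEnd ℂ z) ∈ Metric.ball (0:ℂ) 1 := by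
    intro z hz
    simpa [mem_ball_zero_iff] using mem_ball_zero_iff.1 hz
  have hdiff : ∀ {j : ℍ} (hj : Sph2 j) {z : ℂ}, z ∈ Metric.ball (0:ℂ) 1 →
      DifferentiableAt ℝ g (eC j z) ∧
      fderiv ℝ g (eC j z) j = j * fderiv ℝ g (eC j z) 1 := by
    intro j hj z hz
    have hm : ((z.re:ℍ) + z.im • j) ∈ B4 := by rw [← eC_apply]; exact hmem hj hz
    obtain ⟨hd, hcr⟩ := hg hj z.re z.im hm
    rw [← eC_apply] at hd hcr
    exact ⟨hd, cr_dir hj hcr⟩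
  have hdiffF : DifferentiableOn ℂ F (Metric.ball (0:ℂ) 1) := by
    intro z hz
    obtain ⟨hdA, hcrA⟩ := hdiff hi hz
    obtain ⟨hdB, hcrB⟩ := hdiff hk hz
    obtain ⟨hdC, hcrC⟩ := hdiff hk (hconj_mem hz)
    set A := fderiv ℝ g (eC i z) with hA
    set B := fderiv ℝ g (eC k z) with hB
    set C := fderiv ℝ g (eC k (starRingEnd ℂ z)) with hC
    set cc : ℂ →L[ℝ] ℂ := Complex.conjCLE.toContinuousLinearMap with hcc
    have hccz : ∀ w : ℂ, cc w = starRingEnd ℂ w := fun w => rfl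
    have h1 : HasFDerivAt (fun z => g (eC i z)) (A.comp (eC i)) z :=
      (hdA.hasFDerivAt).comp z ((eC i).hasFDerivAt)
    have h2 : HasFDerivAt (fun z => (1 - i*k) * g (eC k z))
        ((ContinuousLinearMap.mul ℝ ℍ (1 - i*k)).comp (B.comp (eC k))) z :=
      ((ContinuousLinearMap.mul ℝ ℍ (1 - i*k)).hasFDerivAt).comp z
        ((hdB.hasFDerivAt).comp z ((eC k).hasFDerivAt))
    have h3 : HasFDerivAt (fun z => (1 + i*k) * g (eC k (starRingEnd ℂ z)))
        ((ContinuousLinearMap.mul ℝ ℍ (1 + i*k)).comp (C.comp ((eC k).comp cc))) z :=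
      ((ContinuousLinearMap.mul ℝ ℍ (1 + i*k)).hasFDerivAt).comp z
        ((hdC.hasFDerivAt).comp z (((eC k).comp cc).hasFDerivAt))
    have hG : HasFDerivAt F
        ((A.comp (eC i)) - (2⁻¹:ℝ) • ((ContinuousLinearMap.mul ℝ ℍ (1 - i*k)).comp (B.comp (eC k))
          + (ContinuousLinearMap.mul ℝ ℍ (1 + i*k)).comp (C.comp ((eC k).comp cc)))) z :=
      h1.sub ((h2.add h3).const_smul (2⁻¹:ℝ))
    set d : ℍ := A 1 - (2⁻¹:ℝ) • ((1 - i*k) * B 1 + (1 + i*k) * C 1) with hd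
    have key : HasFDerivAt F (ContinuousLinearMap.smulRight (1 : ℂ →L[ℂ] ℂ) d) z := by
      apply hasFDerivAt_of_restrictScalars ℝ hG
      apply clm_ext_complex
      · show (1:ℂ) • d = _
        rw [one_smul]
        simp only [ContinuousLinearMap.coe_sub', Pi.sub_apply, ContinuousLinearMap.coe_comp',
          Function.comp_apply, ContinuousLinearMap.coe_smul', Pi.smul_apply,
          ContinuousLinearMap.add_apply, ContinuousLinearMap.mul_apply', hccz, eC_one,
          map_one (starRingEnd ℂ)]
        exact hd
      · show (Complex.I) • d = _
        rw [hsmul, Complex.liftAux_apply_I]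
        simp only [ContinuousLinearMap.coe_sub', Pi.sub_apply, ContinuousLinearMap.coe_comp',
          Function.comp_apply, ContinuousLinearMap.coe_smul', Pi.smul_apply,
          ContinuousLinearMap.add_apply, ContinuousLinearMap.mul_apply', hccz, Complex.conj_I,
          map_neg (eC k), eC_I, map_neg C]
        rw [hcrA, hcrB, hcrC]
        have e1 : (1 - i*k) * (k * B 1) = (k + i) * B 1 := by
          rw [← mul_assoc, sub_mul, one_mul, mul_assoc i k k, hk.mul_self, mul_neg_one,
            sub_neg_eq_add]
        have e2 : (1 + i*k) * -(k * C 1) = (i - k) * C 1 := by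
          rw [mul_neg, ← mul_assoc, add_mul, one_mul, mul_assoc i k k, hk.mul_self, mul_neg_one,
            ← sub_eq_add_neg, ← neg_mul, neg_sub]
        have f1 : i * (1 - i*k) = k + i := by
          rw [mul_sub, mul_one, ← mul_assoc, hi.mul_self, neg_one_mul, sub_neg_eq_add, add_comm]
        have f2 : i * (1 + i*k) = i - k := by
          rw [mul_add, mul_one, ← mul_assoc, hi.mul_self, neg_one_mul, ← sub_eq_add_neg]
        rw [e1, e2, hd, mul_sub, mul_smul_comm, mul_add, ← mul_assoc, ← mul_assoc, f1, f2]
    exact key.differentiableAt.differentiableWithinAt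
  have hanal : AnalyticOnNhd ℂ F (Metric.ball (0:ℂ) 1) :=
    hdiffF.analyticOnNhd Metric.isOpen_ball
  have hreal : ∀ t : ℝ, F (t:ℂ) = 0 := by
    intro t
    have h1 : ∀ j : ℍ, eC j (t:ℂ) = (t:ℍ) := by
      intro j; rw [eC_apply, Complex.ofReal_re, Complex.ofReal_im, zero_smul, add_zero]
    have h3 : starRingEnd ℂ (t:ℂ) = (t:ℂ) := Complex.conj_ofReal t
    show g (eC i (t:ℂ)) - (2⁻¹:ℝ) • ((1 - i*k) * g (eC k (t:ℂ))
        + (1 + i*k) * g (eC k (starRingEnd ℂ (t:ℂ)))) = 0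
    rw [h3, h1, h1]
    rw [← add_mul]
    have h4 : (1 - i*k) + (1 + i*k) = (2:ℍ) := by
      rw [sub_add_add_cancel, one_add_one_eq_two]
    rw [h4]
    have h5 : (2:ℍ) * g (t:ℍ) = (2:ℝ) • g (t:ℍ) := by
      rw [two_smul, two_mul]
    rw [h5, smul_smul]
    norm_num
  have hfreq : ∃ᶠ z in nhdsWithin (0:ℂ) {z | z ≠ 0}, F z = 0 := by
    have htend : Tendsto (fun n : ℕ => ((1/((n:ℝ)+1) : ℝ) : ℂ)) atTop (nhdsWithin (0:ℂ) {z | z ≠ 0}) := by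
      rw [tendsto_nhdsWithin_iff]
      constructor
      · have : Tendsto (fun n : ℕ => (1/((n:ℝ)+1) : ℝ)) atTop (nhds 0) :=
          tendsto_one_div_add_atTop_nhds_zero_nat
        have h0 := (Complex.continuous_ofReal.tendsto 0).comp this
        rw [Complex.ofReal_zero] at h0
        exact h0
      · filter_upwards with n
        simp only [Set.mem_setOf_eq, ne_eq, Complex.ofReal_eq_zero]
        positivity
    exact htend.frequently (Frequently.of_forall (fun n => hreal _))
  have hzero : Set.EqOn F 0 (Metric.ball (0:ℂ) 1) :=
    hanal.eqOn_zero_of_preconnected_of_frequently_eq_zero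
      (convex_ball (0:ℂ) 1).isPreconnected (Metric.mem_ball_self one_pos) hfreq
  set z₀ : ℂ := ⟨x, y⟩ with hz₀
  have hz₀re : z₀.re = x := rfl
  have hz₀im : z₀.im = y := rfl
  have hz₀mem : z₀ ∈ Metric.ball (0:ℂ) 1 := by
    rw [mem_ball_zero_iff]
    have h2 : ‖z₀‖^2 = x^2 + y^2 := by
      rw [Complex.sq_norm, Complex.normSq_apply, hz₀re, hz₀im]; ring
    nlinarith [norm_nonneg z₀]
  have hFz := hzero hz₀mem
  have hei : eC i z₀ = (x:ℍ) + y • i := by rw [eC_apply, hz₀re, hz₀im]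
  have hek : eC k z₀ = (x:ℍ) + y • k := by rw [eC_apply, hz₀re, hz₀im]
  have hekc : eC k (starRingEnd ℂ z₀) = (x:ℍ) + (-y) • k := by
    rw [eC_apply, Complex.conj_re, Complex.conj_im, hz₀re, hz₀im]
  have : g (eC i z₀) - (2⁻¹:ℝ) • ((1 - i*k) * g (eC k z₀)
      + (1 + i*k) * g (eC k (starRingEnd ℂ z₀))) = 0 := hFz
  rw [hei, hek, hekc] at this
  exact sub_eq_zero.1 this

lemma diffAt_of_mem {i₀ : ℍ} (hi₀ : Sph2 i₀) {g : ℍ → ℍ} (hsr : SliceRegularOn g B4)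
    {q : ℍ} (hq : q ∈ B4) : DifferentiableAt ℝ g q := by
  by_cases h : q.im = 0
  · have hq' : q = (q.re : ℍ) + (0:ℝ) • i₀ := by
      rw [zero_smul, add_zero]
      conv_lhs => rw [← Quaternion.re_add_im q]
      rw [h, add_zero]
    rw [hq'] at hq ⊢
    exact (hsr hi₀ q.re 0 hq).1
  · set iq : ℍ := ‖q.im‖⁻¹ • q.im with hiq
    have hnim : ‖q.im‖ ≠ 0 := by
      simpa [norm_eq_zero] using h
    have hsp : Sph2 iq := by
      constructor
      · rw [hiq, Quaternion.re_smul, Quaternion.re_im, smul_zero]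
      · rw [hiq, norm_smul, norm_inv, norm_norm, inv_mul_cancel₀ hnim]
    have hq' : q = (q.re : ℍ) + ‖q.im‖ • iq := by
      rw [hiq, smul_smul, mul_inv_cancel₀ hnim, one_smul, Quaternion.re_add_im]
    rw [hq'] at hq ⊢
    exact (hsr hsp q.re ‖q.im‖ hq).1

lemma contOn_of_slice {i₀ : ℍ} (hi₀ : Sph2 i₀) {g : ℍ → ℍ} (hsr : SliceRegularOn g B4) :
    ContinuousOn g B4 :=
  fun q hq => ((diffAt_of_mem hi₀ hsr hq).continuousAt).continuousWithinAt

lemma cont_emb (j : ℍ) : Continuous (fun p : ℝ × ℝ => (p.1 : ℍ) + p.2 • j) := by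
  have h1 : Continuous (fun r : ℝ => (r : ℍ)) := continuous_algebraMap ℝ ℍ
  exact (h1.comp continuous_fst).add (continuous_snd.smul continuous_const)

lemma maps_disk {j : ℍ} (hj : Sph2 j) {p : ℝ × ℝ} (hp : p ∈ unitDisk) :
    ((p.1 : ℍ) + p.2 • j) ∈ B4 := by
  have := norm_mk j hj p.1 p.2
  have h2 : p.1^2 + p.2^2 < 1 := hp
  have h3 : Real.sqrt (p.1^2 + p.2^2) < 1 := by
    rw [show (1:ℝ) = Real.sqrt 1 by simp]
    exact Real.sqrt_lt_sqrt (by positivity) (by simpa using h2)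
  show ‖(p.1 : ℍ) + p.2 • j‖ < 1
  rw [this]; exact h3

lemma half_combo (u a b : ℍ) :
    (2⁻¹:ℝ) • ((1-u)*a + (1+u)*b) - a = (2⁻¹:ℝ) • ((1+u)*(b-a)) := by
  have key : (1-u)*a + (1+u)*b - (a+a) = (1+u)*(b-a) := by noncomm_ring
  apply smul_right_injective ℍ (two_ne_zero (α := ℝ))
  show (2:ℝ) • _ = (2:ℝ) • _
  rw [smul_sub, smul_smul, smul_smul]
  norm_num
  rw [two_smul ℝ a]
  exact key

lemma norm_one_add_mul {i k : ℍ} (hi : Sph2 i) (hk : Sph2 k) : ‖1 + i*k‖ = ‖i - k‖ := by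
  have h : (-i) * (1 + i*k) = k - i := by
    rw [neg_mul, mul_add, mul_one, ← mul_assoc, hi.mul_self, neg_one_mul, neg_add, neg_neg,
      add_comm, ← sub_eq_add_neg]
  have h2 : ‖(-i) * (1 + i*k)‖ = ‖1 + i*k‖ := by
    rw [norm_mul, norm_neg, hi.2, one_mul]
  rw [h] at h2
  rw [← h2, norm_sub_rev]


set_option maxHeartbeats 1000000 in
/-- `(∫_D ‖g(x+iy) − g(x+ky)‖² dμ)^{1/2} ≤ √2 ‖i − k‖ ‖g‖_{A_k(𝔹⁴)}`. -/
theorem slice_difference_bound (k : ℍ) (hk : Sph2 k)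
    (g : ℍ → ℍ) (hg : MemBergB k g) (i : ℍ) (hi : Sph2 i) :
    Real.sqrt (∫ p in unitDisk,
        ‖g ((p.1 : ℍ) + p.2 • i) - g ((p.1 : ℍ) + p.2 • k)‖ ^ 2)
      ≤ Real.sqrt 2 * ‖i - k‖ * bergNormB k g := by
  obtain ⟨hsr, hInt⟩ := hg
  set c := ‖i - k‖ with hc
  have hc0 : 0 ≤ c := norm_nonneg _
  set N : ℝ × ℝ → ℝ := fun p => ‖g ((p.1 : ℍ) + p.2 • k)‖ ^ 2 with hN
  set φ : ℝ × ℝ → ℝ × ℝ := fun p => (p.1, -p.2) with hφ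
  -- measure-preserving reflection
  have hmp : MeasurePreserving φ (volume : Measure (ℝ × ℝ)) volume := by
    have := (MeasurePreserving.id (volume : Measure ℝ)).prod
      (Measure.measurePreserving_neg (volume : Measure ℝ))
    exact this
  have hemb : MeasurableEmbedding φ := by
    have : φ = fun p : ℝ × ℝ => ((Homeomorph.refl ℝ).prodCongr (Homeomorph.neg ℝ)) p := rfl
    rw [this]
    exact ((Homeomorph.refl ℝ).prodCongr (Homeomorph.neg ℝ)).measurableEmbedding
  have hφpre : φ ⁻¹' unitDisk = unitDisk := by
    ext p; simp [unitDisk, hφ, neg_pow]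
  have hDopen : IsOpen unitDisk := by
    have : unitDisk = (fun p : ℝ × ℝ => p.1^2 + p.2^2) ⁻¹' (Set.Iio 1) := rfl
    rw [this]
    exact IsOpen.preimage (by continuity) isOpen_Iio
  have hDmeas : MeasurableSet unitDisk := hDopen.measurableSet
  -- integrability of reflected integrand
  have hIntr : IntegrableOn (fun p => N (φ p)) unitDisk volume := by
    rw [show (fun p => N (φ p)) = N ∘ φ from rfl, ← hφpre]
    exact (hmp.integrableOn_comp_preimage hemb).2 hInt
  have hIr : ∫ p in unitDisk, N (φ p) = ∫ p in unitDisk, N p := by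
    calc ∫ p in unitDisk, N (φ p) = ∫ p in φ ⁻¹' unitDisk, N (φ p) := by rw [hφpre]
      _ = ∫ p in unitDisk, N p := hmp.setIntegral_preimage_emb hemb N unitDisk
  -- pointwise difference identity and bound
  have hdiff_eq : ∀ p ∈ unitDisk,
      g ((p.1 : ℍ) + p.2 • i) - g ((p.1 : ℍ) + p.2 • k)
        = (2⁻¹:ℝ) • ((1 + i*k) * (g ((p.1:ℍ) + (-p.2) • k) - g ((p.1:ℍ) + p.2 • k))) := by
    intro p hp
    have hxy : p.1^2 + p.2^2 < 1 := hp
    rw [rep_formula hk hi hsr hxy]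
    exact half_combo (i*k) _ _
  have hptbound : ∀ p ∈ unitDisk,
      ‖g ((p.1 : ℍ) + p.2 • i) - g ((p.1 : ℍ) + p.2 • k)‖ ^ 2
        ≤ 2⁻¹ * c^2 * (N (φ p) + N p) := by
    intro p hp
    rw [hdiff_eq p hp]
    have h1 : ‖(2⁻¹:ℝ) • ((1 + i*k) * (g ((p.1:ℍ) + (-p.2) • k) - g ((p.1:ℍ) + p.2 • k)))‖
        = 2⁻¹ * (c * ‖g ((p.1:ℍ) + (-p.2) • k) - g ((p.1:ℍ) + p.2 • k)‖) := by
      rw [norm_smul, norm_mul, norm_one_add_mul hi hk, ← hc]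
      norm_num
    rw [h1]
    have h2 : ‖g ((p.1:ℍ) + (-p.2) • k) - g ((p.1:ℍ) + p.2 • k)‖
        ≤ ‖g ((p.1:ℍ) + (-p.2) • k)‖ + ‖g ((p.1:ℍ) + p.2 • k)‖ := norm_sub_le _ _
    have hNφ : N (φ p) = ‖g ((p.1:ℍ) + (-p.2) • k)‖^2 := rfl
    have hNp : N p = ‖g ((p.1:ℍ) + p.2 • k)‖^2 := rfl
    rw [hNφ, hNp]
    set a := ‖g ((p.1:ℍ) + (-p.2) • k)‖
    set b := ‖g ((p.1:ℍ) + p.2 • k)‖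
    have ha : 0 ≤ a := norm_nonneg _
    have hb : 0 ≤ b := norm_nonneg _
    have hd : 0 ≤ ‖g ((p.1:ℍ) + (-p.2) • k) - g ((p.1:ℍ) + p.2 • k)‖ := norm_nonneg _
    have h3 : ‖g ((p.1:ℍ) + (-p.2) • k) - g ((p.1:ℍ) + p.2 • k)‖^2 ≤ (a+b)^2 := by
      nlinarith
    have h4 : (a+b)^2 ≤ 2*(a^2+b^2) := by nlinarith [sq_nonneg (a-b)]
    have h5 := mul_le_mul_of_nonneg_left h3 (sq_nonneg c)
    have h6 := mul_le_mul_of_nonneg_left h4 (sq_nonneg c)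
    nlinarith [h5, h6]
  -- continuity/measurability of the difference integrand
  have hcont : ContinuousOn (fun p : ℝ × ℝ =>
      ‖g ((p.1 : ℍ) + p.2 • i) - g ((p.1 : ℍ) + p.2 • k)‖ ^ 2) unitDisk := by
    have hgc := contOn_of_slice hi hsr
    have h1 : ContinuousOn (fun p : ℝ × ℝ => g ((p.1 : ℍ) + p.2 • i)) unitDisk :=
      hgc.comp (cont_emb i).continuousOn (fun p hp => maps_disk hi hp)
    have h2 : ContinuousOn (fun p : ℝ × ℝ => g ((p.1 : ℍ) + p.2 • k)) unitDisk :=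
      hgc.comp (cont_emb k).continuousOn (fun p hp => maps_disk hk hp)
    exact ((h1.sub h2).norm).pow 2
  have hIntBound : IntegrableOn (fun p => 2⁻¹ * c^2 * (N (φ p) + N p)) unitDisk volume :=
    (hIntr.add hInt).const_mul _
  have hIntDiff : IntegrableOn (fun p : ℝ × ℝ =>
      ‖g ((p.1 : ℍ) + p.2 • i) - g ((p.1 : ℍ) + p.2 • k)‖ ^ 2) unitDisk volume := by
    apply Integrable.mono' hIntBound (hcont.aestronglyMeasurable hDmeas)
    rw [ae_restrict_iff' hDmeas]
    filter_upwards with p hp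
    rw [Real.norm_of_nonneg (by positivity)]
    exact hptbound p hp
  -- integral bound
  have hIle : ∫ p in unitDisk, ‖g ((p.1 : ℍ) + p.2 • i) - g ((p.1 : ℍ) + p.2 • k)‖ ^ 2
      ≤ c^2 * ∫ p in unitDisk, N p := by
    calc ∫ p in unitDisk, ‖g ((p.1 : ℍ) + p.2 • i) - g ((p.1 : ℍ) + p.2 • k)‖ ^ 2
        ≤ ∫ p in unitDisk, 2⁻¹ * c^2 * (N (φ p) + N p) :=
          setIntegral_mono_on hIntDiff hIntBound hDmeas hptbound
      _ = 2⁻¹ * c^2 * ((∫ p in unitDisk, N (φ p)) + ∫ p in unitDisk, N p) := by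
          rw [← integral_add hIntr hInt, ← integral_const_mul]
      _ = c^2 * ∫ p in unitDisk, N p := by rw [hIr]; ring
  -- conclude
  have hS0 : 0 ≤ ∫ p in unitDisk, N p :=
    integral_nonneg (fun p => by positivity)
  have hfinal : Real.sqrt (∫ p in unitDisk,
      ‖g ((p.1 : ℍ) + p.2 • i) - g ((p.1 : ℍ) + p.2 • k)‖ ^ 2)
      ≤ c * bergNormB k g := by
    have h1 := Real.sqrt_le_sqrt hIle
    have h2 : Real.sqrt (c^2 * ∫ p in unitDisk, N p)
        = c * Real.sqrt (∫ p in unitDisk, N p) := by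
      rw [Real.sqrt_mul (by positivity), Real.sqrt_sq hc0]
    rw [h2] at h1
    exact h1
  have h2le : (1:ℝ) ≤ Real.sqrt 2 := by
    rw [show (1:ℝ) = Real.sqrt 1 by simp]
    exact Real.sqrt_le_sqrt (by norm_num)
  have hbn : 0 ≤ bergNormB k g := Real.sqrt_nonneg _
  calc Real.sqrt (∫ p in unitDisk,
      ‖g ((p.1 : ℍ) + p.2 • i) - g ((p.1 : ℍ) + p.2 • k)‖ ^ 2)
      ≤ c * bergNormB k g := hfinal
    _ ≤ Real.sqrt 2 * c * bergNormB k g := by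
        nlinarith [mul_nonneg hc0 hbn, mul_le_mul_of_nonneg_right h2le (mul_nonneg hc0 hbn)]
    _ = Real.sqrt 2 * ‖i - k‖ * bergNormB k g := by rw [hc]
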